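/- There exists an absolute constant C > 0 such that for every n ≥ 1 and every set A = {0 = j₀ < j₁ < ⋯ < j_r} ⊆ {0,1,…,n−1}, writing j_{r+1} = n, one has Σ_{k=0}^{2^n−1} ∏_{1 ≤ j < n, j ∉ A} |cos(π k / 2^{n−j})| ≤ C^{r+1} · ∏_{s=0}^{r} (j_{s+1} − j_s). -/

import Mathlib

open Finset
open Real

lemma abs_cos_add_nat_mul_pi (y : ℝ) (K : ℕ) : |Real.cos (y + K * π)| = |Real.cos y| := by
  induction K with
  | zero => simp
  | succ k ih =>
      have h : ((k+1:ℕ):ℝ) * π = k * π + π := by push_cast; ring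
      rw [h, ← add_assoc, Real.cos_add_pi, abs_neg, ih]

lemma sum_range_two_mul_split (N : ℕ) (f : ℕ → ℝ) :
    ∑ k ∈ range (2*N), f k = ∑ q ∈ range N, (f (2*q) + f (2*q+1)) := by
  induction N with
  | zero => simp
  | succ n ih =>
      have h : 2*(n+1) = 2*n + 1 + 1 := by ring
      rw [h, Finset.sum_range_succ, Finset.sum_range_succ, ih, Finset.sum_range_succ]
      ring

lemma prod_split (L q e : ℕ) (x : ℝ) :
    ∏ i ∈ range (L+1), |Real.cos (π * ((2*q+e : ℕ) + x) / 2^(i+1))|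
      = |Real.cos (π * (e + x) / 2)| * ∏ i ∈ range L, |Real.cos (π * (q + (e + x)/2) / 2^(i+1))| := by
  rw [Finset.prod_range_succ']
  rw [mul_comm]
  congr 1
  · have : π * ((2*q+e : ℕ) + x) / 2^(0+1) = π * (e + x) / 2 + (q:ℕ) * π := by
      push_cast; ring
    rw [this]
    exact abs_cos_add_nat_mul_pi _ _
  · apply Finset.prod_congr rfl
    intro i _
    congr 2
    push_cast
    rw [pow_succ]
    field_simp
    ring

lemma lemA (L : ℕ) : ∀ x : ℝ,
    ∑ k ∈ range (2^L), ∏ i ∈ range L, |Real.cos (π * (k + x) / 2^(i+1))|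
      ≤ 1 + L/2 * |Real.sin (π * x)| := by
  induction L with
  | zero =>
      intro x
      simp
  | succ L ih =>
      intro x
      have hsplit : (2:ℕ)^(L+1) = 2 * 2^L := by ring
      rw [hsplit, sum_range_two_mul_split]
      have h0 : ∀ q : ℕ, ∏ i ∈ range (L+1), |Real.cos (π * ((2*q : ℕ) + x) / 2^(i+1))|
          = |Real.cos (π * x / 2)| * ∏ i ∈ range L, |Real.cos (π * ((q:ℝ) + x/2) / 2^(i+1))| := by
        intro q
        have h := prod_split L q 0 x
        simpa [mul_div_assoc] using h
      have h1 : ∀ q : ℕ, ∏ i ∈ range (L+1), |Real.cos (π * ((2*q+1 : ℕ) + x) / 2^(i+1))|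
          = |Real.sin (π * x / 2)| * ∏ i ∈ range L, |Real.cos (π * ((q:ℝ) + (1+x)/2) / 2^(i+1))| := by
        intro q
        have h := prod_split L q 1 x
        have harg : π * (((1:ℕ):ℝ) + x) / 2 = π * x / 2 + π/2 := by push_cast; ring
        rw [harg, Real.cos_add_pi_div_two, abs_neg] at h
        simpa using h
      simp only [h0, h1]
      rw [Finset.sum_add_distrib, ← Finset.mul_sum, ← Finset.mul_sum]
      have hA := ih (x/2)
      have hB := ih ((1+x)/2)
      have hsinA : |Real.sin (π * (x/2))| = |Real.sin (π * x / 2)| := by rw [mul_div_assoc]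
      have hsinB : |Real.sin (π * ((1+x)/2))| = |Real.cos (π * x / 2)| := by
        have h2 : π * ((1+x)/2) = π * x / 2 + π/2 := by ring
        rw [h2, Real.sin_add_pi_div_two]
      rw [hsinA] at hA
      rw [hsinB] at hB
      set a := |Real.cos (π * x / 2)| with ha
      set b := |Real.sin (π * x / 2)| with hb
      have ha0 : 0 ≤ a := abs_nonneg _
      have hb0 : 0 ≤ b := abs_nonneg _
      have ha1 : a ≤ 1 := Real.abs_cos_le_one _
      have hb1 : b ≤ 1 := Real.abs_sin_le_one _
      have hd : |Real.sin (π * x)| = 2 * (b * a) := by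
        have h3 : π * x = 2 * (π * x / 2) := by ring
        rw [h3, Real.sin_two_mul, abs_mul, abs_mul, abs_two]
        ring
      calc a * (∑ q ∈ range (2^L), ∏ i ∈ range L, |Real.cos (π * ((q:ℝ) + x/2) / 2^(i+1))|)
            + b * (∑ q ∈ range (2^L), ∏ i ∈ range L, |Real.cos (π * ((q:ℝ) + (1+x)/2) / 2^(i+1))|)
          ≤ a * (1 + L/2 * b) + b * (1 + L/2 * a) :=
            add_le_add (mul_le_mul_of_nonneg_left hA ha0) (mul_le_mul_of_nonneg_left hB hb0)
        _ ≤ 1 + (L+1:ℕ)/2 * |Real.sin (π * x)| := by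
            rw [hd]
            push_cast
            nlinarith [mul_nonneg (sub_nonneg.2 ha1) (sub_nonneg.2 hb1),
              mul_nonneg ha0 hb0, (Nat.cast_nonneg L : (0:ℝ) ≤ L)]

lemma innerB (L : ℕ) (x : ℝ) :
    ∑ u ∈ range (2^(L+1)), ∏ i ∈ range L, |Real.cos (π * (u + x) / 2^(i+1))|
      ≤ (L : ℝ) + 2 := by
  have hsplit : (2:ℕ)^(L+1) = 2^L + 2^L := by ring
  rw [hsplit, Finset.sum_range_add]
  have heq : ∀ k ∈ range (2^L),
      ∏ i ∈ range L, |Real.cos (π * ((2^L + k : ℕ) + x) / 2^(i+1))|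
        = ∏ i ∈ range L, |Real.cos (π * ((k:ℝ) + x) / 2^(i+1))| := by
    intro k _
    apply Finset.prod_congr rfl
    intro i hi
    have hi' : i < L := mem_range.1 hi
    obtain ⟨M, hM⟩ : ∃ M, L = i+1+M := ⟨L - (i+1), by omega⟩
    have habs := abs_cos_add_nat_mul_pi (π * ((k:ℝ) + x) / 2^(i+1)) (2^M)
    push_cast at habs ⊢
    rw [hM, pow_add]
    have harg : π * ((2:ℝ)^(i+1) * 2^M + (k:ℝ) + x) / 2^(i+1)
        = π * ((k:ℝ) + x) / 2^(i+1) + (2:ℝ)^M * π := by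
      have h2 : ((2:ℝ)^(i+1)) ≠ 0 := by positivity
      field_simp
      ring
    rw [harg]
    exact habs
  rw [Finset.sum_congr rfl heq]
  have hlem := lemA L x
  have hsin : |Real.sin (π * x)| ≤ 1 := Real.abs_sin_le_one _
  have hL : (0:ℝ) ≤ (L:ℝ) := Nat.cast_nonneg L
  nlinarith [hlem]

lemma sum_range_mul_eq (a b : ℕ) (f : ℕ → ℝ) :
    ∑ k ∈ range (a*b), f k = ∑ u ∈ range a, ∑ s ∈ range b, f (u*b + s) := by
  induction a with
  | zero => simp
  | succ a ih =>
      rw [Nat.succ_mul, Finset.sum_range_add, ih, Finset.sum_range_succ]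

lemma prod_Ico_reflect (n : ℕ) (g : ℕ → ℝ) :
    ∏ t ∈ Ico 1 n, g (n - t) = ∏ m ∈ Ico 1 n, g m := by
  apply Finset.prod_nbij' (fun t => n - t) (fun m => n - m)
  · intro a ha; simp only [mem_Ico] at *; omega
  · intro a ha; simp only [mem_Ico] at *; omega
  · intro a ha; simp only [mem_Ico] at *; omega
  · intro a ha; simp only [mem_Ico] at *; omega
  · intro a _; rfl

lemma j_mono (j : ℕ → ℕ) (R : ℕ) (hj : ∀ s, s ≤ R → j s < j (s+1)) :
    ∀ a b, a ≤ b → b ≤ R+1 → j a ≤ j b := by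
  intro a b
  induction b with
  | zero => intro h _; simp [Nat.le_zero.mp h]
  | succ b ihb =>
      intro hab hbR
      rcases Nat.eq_or_lt_of_le hab with rfl | hl
      · exact le_rfl
      · have h1 : j a ≤ j b := ihb (by omega) (by omega)
        have h2 : j b < j (b+1) := hj b (by omega)
        omega

lemma main_aux : ∀ (r n : ℕ) (j : ℕ → ℕ), 1 ≤ n → j 0 = 0 → j (r+1) = n →
    (∀ s, s ≤ r → j s < j (s+1)) →
    ∑ k ∈ range (2^n), ∏ t ∈ (Ico 1 n).filter (fun t => t ∉ (range (r+1)).image j),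
        |Real.cos (π * k / 2^(n-t))|
      ≤ 2^(r+1) * ∏ s ∈ range (r+1), ((j (s+1) : ℝ) - j s) := by
  intro r
  induction r with
  | zero =>
      intro n j hn hj0 hj1 hj
      have hset : (Ico 1 n).filter (fun t => t ∉ (range 1).image j) = Ico 1 n := by
        apply Finset.filter_true_of_mem
        intro t ht hmem
        obtain ⟨s, hs, hst⟩ := Finset.mem_image.1 hmem
        have hs0 : s = 0 := by simpa using hs
        subst hs0
        rw [hj0] at hst
        have := (Finset.mem_Ico.1 ht).1
        omega
      rw [hset]
      have hprod : ∀ k ∈ range (2^n), ∏ t ∈ Ico 1 n, |Real.cos (π * k / 2^(n-t))|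
          = ∏ i ∈ range (n-1), |Real.cos (π * ((k:ℝ) + 0) / 2^(i+1))| := by
        intro k _
        rw [prod_Ico_reflect n (fun m => |Real.cos (π * k / 2^m)|),
          Finset.prod_Ico_eq_prod_range]
        apply Finset.prod_congr rfl
        intro i _
        rw [add_zero, add_comm 1 i]
      rw [Finset.sum_congr rfl hprod]
      have h2n : (2:ℕ)^n = 2^((n-1)+1) := by congr 1; omega
      rw [h2n]
      have hB := innerB (n-1) 0
      have hle : ((n-1:ℕ):ℝ) + 2 ≤ 2^(0+1) * ∏ s ∈ range (0+1), ((j (s+1) : ℝ) - j s) := by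
        have hj1' : j 1 = n := hj1
        simp only [zero_add, Finset.prod_range_one, hj1', hj0]
        rw [Nat.cast_sub hn]
        push_cast
        have h1n : (1:ℝ) ≤ n := by exact_mod_cast hn
        nlinarith [h1n]
      exact le_trans hB hle
  | succ r ih =>
      intro n j hn hj0 hlast hj
      have hmono : ∀ a b, a ≤ b → b ≤ r+2 → j a ≤ j b := j_mono j (r+1) hj
      have h00 : j 0 < j 1 := hj 0 (by omega)
      have h01 : 1 ≤ j 1 := by omega
      have hj1n : j 1 < n := by
        have h12 : j 1 < j (1+1) := hj 1 (by omega)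
        have h2n : j (1+1) ≤ j (r+1+1) := hmono (1+1) (r+1+1) (by omega) (by omega)
        omega
      set h : ℕ := n - j 1 with hhdef
      have hh1 : 1 ≤ h := by omega
      have hnj : n = j 1 + h := by omega
      set j' : ℕ → ℕ := fun s => j (s+1) - j 1 with hj'set
      have hj'def : ∀ s, j' s = j (s+1) - j 1 := fun s => rfl
      have hj'0 : j' 0 = 0 := by
        have e : j' 0 = j 1 - j 1 := rfl
        omega
      have hj'last : j' (r+1) = h := by
        have e : j' (r+1) = j (r+1+1) - j 1 := rfl
        omega
      have hj'inc : ∀ s, s ≤ r → j' s < j' (s+1) := by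
        intro s hs
        have h1 := hj (s+1) (by omega)
        have h2 : j 1 ≤ j (s+1) := hmono 1 (s+1) (by omega) (by omega)
        rw [hj'def, hj'def]
        omega
      have hIH := ih h j' hh1 hj'0 hj'last hj'inc
      have hTsplit : (Ico 1 n).filter (fun t => t ∉ (range (r+1+1)).image j)
          = (Ico 1 (j 1)) ∪ (Ico (j 1 + 1) n).filter (fun t => t ∉ (range (r+1+1)).image j) := by
        ext t
        simp only [Finset.mem_filter, Finset.mem_Ico, Finset.mem_union, Finset.mem_image,
          Finset.mem_range, not_exists, not_and]
        constructor
        · rintro ⟨⟨h1t, htn⟩, hnot⟩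
          by_cases hcase : t < j 1
          · exact Or.inl ⟨h1t, hcase⟩
          · have hne1 : ¬ j 1 = t := hnot 1 (by omega)
            exact Or.inr ⟨⟨by omega, htn⟩, hnot⟩
        · rintro (⟨h1t, htj⟩ | ⟨⟨h1t, htn⟩, hnot⟩)
          · refine ⟨⟨h1t, by omega⟩, ?_⟩
            intro s hs hst
            rcases Nat.eq_zero_or_pos s with rfl | hspos
            · rw [hj0] at hst; omega
            · have : j 1 ≤ j s := hmono 1 s hspos (by omega)
              omega
          · exact ⟨⟨by omega, htn⟩, hnot⟩
      have hdisj : Disjoint (Ico 1 (j 1))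
          ((Ico (j 1 + 1) n).filter (fun t => t ∉ (range (r+1+1)).image j)) := by
        rw [Finset.disjoint_left]
        intro t ht ht'
        have ha1 := (Finset.mem_Ico.1 ht).2
        have ha2 := (Finset.mem_Ico.1 (Finset.mem_filter.1 ht').1).1
        omega
      rw [hTsplit]
      have h2n : (2:ℕ)^n = 2^(j 1) * 2^h := by rw [hnj, pow_add]
      rw [h2n, sum_range_mul_eq]
      have hterm : ∀ u ∈ range (2^(j 1)), ∀ s ∈ range (2^h),
          ∏ t ∈ Ico 1 (j 1) ∪ (Ico (j 1 + 1) n).filter (fun t => t ∉ (range (r+1+1)).image j),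
              |Real.cos (π * ((u*2^h+s : ℕ):ℝ) / 2^(n-t))|
            = (∏ i ∈ range (j 1 - 1), |Real.cos (π * ((u:ℝ) + (s:ℝ)/2^h) / 2^(i+1))|)
              * ∏ t' ∈ (Ico 1 h).filter (fun t => t ∉ (range (r+1)).image j'),
                  |Real.cos (π * (s:ℝ) / 2^(h-t'))| := by
        intro u hu s hs
        rw [Finset.prod_union hdisj]
        congr 1
        · apply Finset.prod_nbij' (fun t => j 1 - t - 1) (fun i => j 1 - 1 - i)
          · intro a ha; simp only [Finset.mem_Ico, Finset.mem_range] at *; omega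
          · intro a ha; simp only [Finset.mem_Ico, Finset.mem_range] at *; omega
          · intro a ha; simp only [Finset.mem_Ico] at ha; omega
          · intro a ha; simp only [Finset.mem_range] at ha; omega
          · intro t ht
            simp only [Finset.mem_Ico] at ht
            rw [show j 1 - t - 1 + 1 = j 1 - t from by omega]
            have harg : π * ((u*2^h+s : ℕ):ℝ) / 2^(n-t)
                = π * ((u:ℝ) + (s:ℝ)/2^h) / 2^(j 1 - t) := by
              rw [show n - t = (j 1 - t) + h from by omega, pow_add]
              push_cast
              have hz1 : ((2:ℝ)^h) ≠ 0 := by positivity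
              have hz2 : ((2:ℝ)^(j 1 - t)) ≠ 0 := by positivity
              field_simp
            rw [harg]
        · apply Finset.prod_nbij' (fun t => t - j 1) (fun t' => t' + j 1)
          · intro t ht
            simp only [Finset.mem_filter, Finset.mem_Ico, Finset.mem_image,
              Finset.mem_range, not_exists, not_and] at ht ⊢
            obtain ⟨⟨ht1, ht2⟩, hnot⟩ := ht
            refine ⟨⟨by omega, by omega⟩, ?_⟩
            intro s' hs' he
            rw [hj'def] at he
            have hge : j 1 ≤ j (s'+1) := hmono 1 (s'+1) (by omega) (by omega)
            exact hnot (s'+1) (by omega) (by omega)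
          · intro t' ht'
            simp only [Finset.mem_filter, Finset.mem_Ico, Finset.mem_image,
              Finset.mem_range, not_exists, not_and] at ht' ⊢
            obtain ⟨⟨ht1, ht2⟩, hnot⟩ := ht'
            refine ⟨⟨by omega, by omega⟩, ?_⟩
            intro s' hs' he
            rcases Nat.eq_zero_or_pos s' with rfl | hspos
            · rw [hj0] at he; omega
            · obtain ⟨s'', rfl⟩ : ∃ s'', s' = s'' + 1 := ⟨s' - 1, by omega⟩
              have hge : j 1 ≤ j (s''+1) := hmono 1 (s''+1) (by omega) (by omega)
              refine hnot s'' (by omega) ?_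
              rw [hj'def]
              omega
          · intro t ht
            have := (Finset.mem_Ico.1 (Finset.mem_filter.1 ht).1).1
            omega
          · intro t' ht'
            have := (Finset.mem_Ico.1 (Finset.mem_filter.1 ht').1).1
            omega
          · intro t ht
            obtain ⟨htI, -⟩ := Finset.mem_filter.1 ht
            obtain ⟨ht1, ht2⟩ := Finset.mem_Ico.1 htI
            rw [show h - (t - j 1) = n - t from by omega]
            have harg : π * ((u*2^h+s : ℕ):ℝ) / 2^(n-t)
                = π * (s:ℝ)/2^(n-t) + ((u * 2^(h-(n-t)) : ℕ):ℝ) * π := by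
              have h2h : (2:ℝ)^h = 2^(n-t) * 2^(h-(n-t)) := by
                rw [← pow_add]; congr 1; omega
              push_cast
              rw [h2h]
              have hz : ((2:ℝ)^(n-t)) ≠ 0 := by positivity
              field_simp
              ring
            rw [harg]
            exact abs_cos_add_nat_mul_pi _ _
      refine le_trans (le_of_eq (Finset.sum_congr rfl fun u hu =>
        Finset.sum_congr rfl fun s hs => hterm u hu s hs)) ?_
      rw [Finset.sum_comm]
      refine le_trans (le_of_eq (Finset.sum_congr rfl fun s _ =>
        (Finset.sum_mul _ _ _).symm)) ?_
      have hPnn : ∀ s : ℕ, 0 ≤ ∏ t' ∈ (Ico 1 h).filter (fun t => t ∉ (range (r+1)).image j'),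
          |Real.cos (π * (s:ℝ) / 2^(h-t'))| :=
        fun s => Finset.prod_nonneg fun t' _ => abs_nonneg _
      have hQb : ∀ s : ℕ,
          (∑ u ∈ range (2^(j 1)), ∏ i ∈ range (j 1 - 1),
            |Real.cos (π * ((u:ℝ) + (s:ℝ)/2^h) / 2^(i+1))|) ≤ 2 * (j 1 : ℝ) := by
        intro s
        rw [show (2:ℕ)^(j 1) = 2^((j 1 - 1)+1) from by congr 1; omega]
        refine le_trans (innerB (j 1 - 1) ((s:ℝ)/2^h)) ?_
        rw [Nat.cast_sub h01]
        have : (1:ℝ) ≤ (j 1 : ℝ) := by exact_mod_cast h01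
        push_cast
        linarith
      refine le_trans (Finset.sum_le_sum fun s _ =>
        mul_le_mul_of_nonneg_right (hQb s) (hPnn s)) ?_
      rw [← Finset.mul_sum]
      have hj1nn : (0:ℝ) ≤ 2 * (j 1 : ℝ) := by positivity
      refine le_trans (mul_le_mul_of_nonneg_left hIH hj1nn) ?_
      apply le_of_eq
      rw [Finset.prod_range_succ' (fun s => ((j (s+1) : ℝ) - j s)) (r+1)]
      have hprodeq : ∏ s ∈ range (r+1), ((j' (s+1) : ℝ) - j' s)
          = ∏ s ∈ range (r+1), ((j (s+1+1) : ℝ) - j (s+1)) := by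
        apply Finset.prod_congr rfl
        intro s hsr
        have hs' : s < r+1 := Finset.mem_range.1 hsr
        have hge1 : j 1 ≤ j (s+1) := hmono 1 (s+1) (by omega) (by omega)
        have hge2 : j 1 ≤ j (s+1+1) := hmono 1 (s+1+1) (by omega) (by omega)
        rw [hj'def, hj'def, Nat.cast_sub hge1, Nat.cast_sub hge2]
        ring
      rw [hprodeq, hj0]
      push_cast
      ring

/-- for `A = {0 = j₀ < j₁ < ⋯ < j_r} ⊆ {0,…,n-1}` with `j_{r+1} = n`,
`∑_{k<2^n} ∏_{1 ≤ t < n, t ∉ A} |cos(π k / 2^{n-t})| ≤ C^{r+1} ∏_{s=0}^{r} (j_{s+1} - j_s)`. -/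
theorem sum_prod_cos_gap_bound :
    ∃ C : ℝ, 0 < C ∧ ∀ (n r : ℕ) (j : ℕ → ℕ), 1 ≤ n →
      j 0 = 0 → j (r + 1) = n → (∀ s, s ≤ r → j s < j (s + 1)) →
      ∑ k ∈ Finset.range (2 ^ n),
          ∏ t ∈ (Finset.Ico 1 n).filter (fun t => t ∉ (Finset.range (r + 1)).image j),
            |Real.cos (Real.pi * k / 2 ^ (n - t))|
        ≤ C ^ (r + 1) * ∏ s ∈ Finset.range (r + 1), ((j (s + 1) : ℝ) - j s) := by
  exact ⟨2, by norm_num, fun n r j hn h0 h1 hj => main_aux r n j hn h0 h1 hj⟩
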